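/- Let G be a finite simple graph with at least three distinct even cycle lengths (|L_e(G)| ≥ 3) and clique number w(G) ≤ ℓ_e(G), where ℓ_e(G) is the length of a longest even cycle of G. Then the chromatic number of G satisfies χ(G) ≤ ℓ_e(G). -/

import Mathlib

open SimpleGraph

/-- `G` contains a cycle of length `n`. -/
def SimpleGraph.HasCycleLength {V : Type*} (G : SimpleGraph V) (n : ℕ) : Prop :=
  ∃ (v : V) (c : G.Walk v v), c.IsCycle ∧ c.length = n

/-- `L_o(G)`: the set of odd cycle lengths of `G`. -/
def SimpleGraph.oddCycleLengths {V : Type*} (G : SimpleGraph V) : Set ℕ :=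
  {n | Odd n ∧ G.HasCycleLength n}

/-- `L_e(G)`: the set of even cycle lengths of `G`. -/
def SimpleGraph.evenCycleLengths {V : Type*} (G : SimpleGraph V) : Set ℕ :=
  {n | Even n ∧ G.HasCycleLength n}

/-- `G` is 2-connected: at least 3 vertices, and deleting any single vertex
leaves a connected graph. -/
def SimpleGraph.TwoConnected {V : Type*} [Fintype V] (G : SimpleGraph V) : Prop :=
  3 ≤ Fintype.card V ∧ ∀ v : V, (G.induce {v}ᶜ).Connected

open List Finset

namespace EvenCyc

variable {V : Type*} {G : SimpleGraph V}

/-- walk along `x 0, x 1, ..., x n`. -/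
def walkSeg (G : SimpleGraph V) (x : ℕ → V) :
    (n : ℕ) → (h : ∀ i, i < n → G.Adj (x i) (x (i+1))) → G.Walk (x 0) (x n)
  | 0, _ => SimpleGraph.Walk.nil
  | (n+1), h => (walkSeg G x n (fun i hi => h i (by omega))).concat (h n (by omega))

lemma walkSeg_support (x : ℕ → V) (n : ℕ) (h : ∀ i, i < n → G.Adj (x i) (x (i+1))) :
    (walkSeg G x n h).support = (List.range (n+1)).map x := by
  induction n with
  | zero => simp [walkSeg, List.range_succ]
  | succ n ih =>
    rw [walkSeg, SimpleGraph.Walk.support_concat, ih, List.range_succ (n := n+1)]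
    simp

lemma walkSeg_edges (x : ℕ → V) (n : ℕ) (h : ∀ i, i < n → G.Adj (x i) (x (i+1))) :
    (walkSeg G x n h).edges = (List.range n).map (fun i => s(x i, x (i+1))) := by
  induction n with
  | zero => simp [walkSeg]
  | succ n ih =>
    rw [walkSeg, SimpleGraph.Walk.edges_concat, ih, List.range_succ (n := n)]
    simp

lemma walkSeg_length (x : ℕ → V) (n : ℕ) (h : ∀ i, i < n → G.Adj (x i) (x (i+1))) :
    (walkSeg G x n h).length = n := by
  induction n with
  | zero => simp [walkSeg]
  | succ n ih => rw [walkSeg, SimpleGraph.Walk.length_concat, ih]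

lemma hasCycleLength_fn (x : ℕ → V) (n : ℕ) (h3 : 3 ≤ n)
    (hinj : ∀ i j, i < n → j < n → x i = x j → i = j)
    (hadj : ∀ i, i + 1 < n → G.Adj (x i) (x (i+1)))
    (hcl : G.Adj (x (n-1)) (x 0)) : G.HasCycleLength n := by
  have hadj' : ∀ i, i < n - 1 → G.Adj (x i) (x (i+1)) := fun i hi => hadj i (by omega)
  set p : G.Walk (x 0) (x (n-1)) := walkSeg G x (n-1) hadj' with hp
  have hpath : p.IsPath := by
    rw [SimpleGraph.Walk.isPath_def, hp, walkSeg_support]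
    refine List.Nodup.map_on ?_ List.nodup_range
    intro i hi j hj hij
    exact hinj i j (by simp at hi; omega) (by simp at hj; omega) hij
  have hne : ¬ s(x (n-1), x 0) ∈ p.edges := by
    rw [hp, walkSeg_edges]
    intro hmem
    simp only [List.mem_map, List.mem_range] at hmem
    obtain ⟨i, hi, hs⟩ := hmem
    rw [Sym2.eq_iff] at hs
    rcases hs with ⟨h1, h2⟩ | ⟨h1, h2⟩
    · have := hinj i (n-1) (by omega) (by omega) h1; omega
    · have e1 := hinj i 0 (by omega) (by omega) h1
      have e2 := hinj (i+1) (n-1) (by omega) (by omega) h2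
      omega
  refine ⟨x (n-1), SimpleGraph.Walk.cons hcl p, ?_, ?_⟩
  · exact (SimpleGraph.Walk.cons_isCycle_iff p hcl).2 ⟨hpath, hne⟩
  · rw [SimpleGraph.Walk.length_cons, hp, walkSeg_length]; omega

/-- counting odds below an even bound -/
lemma card_odd_range (m : ℕ) :
    ((Finset.range (2*m)).filter (fun i => i % 2 = 1)).card = m := by
  induction m with
  | zero => simp
  | succ m ih =>
    have : 2 * (m+1) = (2*m + 1) + 1 := by ring
    rw [this, Finset.range_add_one, Finset.range_add_one, Finset.filter_insert, Finset.filter_insert]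
    rw [if_pos (by omega), if_neg (by omega)]
    rw [Finset.card_insert_of_notMem (by simp), ih]

lemma card_even_Icc (a t : ℕ) (ha : a % 2 = 0) :
    ((Finset.Icc a (a + 2*t)).filter (fun i => i % 2 = 0)).card = t + 1 := by
  induction t with
  | zero => simp [Finset.Icc_self, Finset.filter_singleton, ha]
  | succ t ih =>
    have h1 : a + 2*(t+1) = (a + 2*t + 1) + 1 := by ring
    rw [h1, ← Finset.insert_Icc_right_eq_Icc_add_one (by omega), ← Finset.insert_Icc_right_eq_Icc_add_one (by omega)]
    rw [Finset.filter_insert, Finset.filter_insert]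
    rw [if_pos (by omega), if_neg (by omega)]
    rw [Finset.card_insert_of_notMem (by simp [Finset.mem_filter]), ih]






/-- A path inside `s`, given by vertices `x 0, ..., x n`. -/
structure Pa (G : SimpleGraph V) (s : Finset V) where
  n : ℕ
  x : ℕ → V
  mem : ∀ i, i ≤ n → x i ∈ s
  inj : ∀ i j, i ≤ n → j ≤ n → x i = x j → i = j
  adj : ∀ i, i < n → G.Adj (x i) (x (i+1))

variable {s : Finset V}

def IsLongest (p : Pa G s) : Prop := ∀ q : Pa G s, q.n ≤ p.n

lemma exists_longest (hs : s.Nonempty) : ∃ p : Pa G s, IsLongest p := by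
  classical
  obtain ⟨v, hv⟩ := hs
  have h0 : (0 : ℕ) ∈ {m | ∃ p : Pa G s, p.n = m} :=
    ⟨⟨0, fun _ => v, fun i _ => hv, fun i j hi hj _ => by omega,
      fun i hi => absurd hi (by omega)⟩, rfl⟩
  have hbdd : BddAbove {m | ∃ p : Pa G s, p.n = m} := by
    refine ⟨s.card, fun m hm => ?_⟩
    obtain ⟨p, rfl⟩ := hm
    have hcard : (Finset.range (p.n + 1)).card ≤ s.card := by
      apply Finset.card_le_card_of_injOn p.x
      · intro a ha
        simp only [Finset.coe_range, Set.mem_Iio] at ha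
        exact p.mem a (by omega)
      · intro a ha b hb hab
        simp only [Finset.coe_range, Set.mem_Iio] at ha hb
        exact p.inj a b (by omega) (by omega) hab
    simp only [Finset.card_range] at hcard
    omega
  have hM := Nat.sSup_mem ⟨0, h0⟩ hbdd
  obtain ⟨p, hp⟩ := hM
  exact ⟨p, fun q => hp ▸ le_csSup hbdd ⟨q, rfl⟩⟩

lemma closure (p : Pa G s) (hp : IsLongest p) {v : V} (hvs : v ∈ s)
    (hadj : G.Adj (p.x 0) v) : ∃ i, 1 ≤ i ∧ i ≤ p.n ∧ p.x i = v := by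
  by_contra hcon
  push_neg at hcon
  have hv0 : v ≠ p.x 0 := fun h => G.irrefl (h ▸ hadj)
  have hvi : ∀ i, i ≤ p.n → v ≠ p.x i := by
    intro i hi h
    rcases Nat.eq_zero_or_pos i with h0 | h1
    · exact hv0 (h0 ▸ h)
    · exact hcon i h1 hi h.symm
  refine absurd (hp ⟨p.n + 1, fun t => if t = 0 then v else p.x (t-1), ?_, ?_, ?_⟩) (by simp)
  · intro t ht
    by_cases h0 : t = 0
    · simpa [h0] using hvs
    · simp only [if_neg h0]
      exact p.mem _ (by omega)
  · intro a b ha hb hab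
    by_cases h0a : a = 0 <;> by_cases h0b : b = 0
    · omega
    · simp only [h0a, h0b, if_true, if_neg, ite_true, ite_false, reduceIte] at hab
      exact absurd hab (hvi _ (by omega))
    · simp only [h0a, h0b, reduceIte] at hab
      exact absurd hab.symm (hvi _ (by omega))
    · rw [if_neg h0a, if_neg h0b] at hab
      have := p.inj _ _ (by omega) (by omega) hab
      omega
  · intro t ht
    by_cases h0 : t = 0
    · subst h0
      simpa using hadj.symm
    · simp only [if_neg h0, if_neg (by omega : ¬ t + 1 = 0)]
      have h1 : t - 1 + 1 = t + 1 - 1 := by omega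
      have := p.adj (t-1) (by omega)
      rwa [h1] at this

def rot (p : Pa G s) (i : ℕ) (hi1 : 1 ≤ i) (hin : i ≤ p.n)
    (hadj : G.Adj (p.x 0) (p.x i)) : Pa G s where
  n := p.n
  x := fun t => if t ≤ i - 1 then p.x (i - 1 - t) else p.x t
  mem := by
    intro t ht
    by_cases h : t ≤ i - 1
    · simp only [if_pos h]; exact p.mem _ (by omega)
    · simp only [if_neg h]; exact p.mem _ ht
  inj := by
    intro a b ha hb hab
    by_cases h1 : a ≤ i - 1 <;> by_cases h2 : b ≤ i - 1 <;>
      simp only [if_pos, if_neg, h1, h2] at hab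
    · have := p.inj _ _ (by omega) (by omega) hab; omega
    · have := p.inj _ _ (by omega) (by omega) hab; omega
    · have := p.inj _ _ (by omega) (by omega) hab; omega
    · exact p.inj _ _ (by omega) (by omega) hab
  adj := by
    intro t ht
    by_cases h1 : t ≤ i - 1
    · by_cases h2 : t + 1 ≤ i - 1
      · simp only [if_pos h1, if_pos h2]
        have h3 : (i - 1 - (t+1)) + 1 = i - 1 - t := by omega
        have := p.adj (i - 1 - (t+1)) (by omega)
        rw [h3] at this
        exact this.symm
      · -- t = i - 1
        have h3 : t = i - 1 := by omega
        simp only [if_pos h1, if_neg h2]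
        have h4 : i - 1 - t = 0 := by omega
        have h5 : t + 1 = i := by omega
        rw [h4, h5]
        exact hadj
    · have h2 : ¬ (t + 1 ≤ i - 1) := by omega
      simp only [if_neg h1, if_neg h2]
      exact p.adj t ht

@[simp] lemma rot_n (p : Pa G s) (i : ℕ) (h1 : 1 ≤ i) (h2 : i ≤ p.n) (h3) :
    (rot p i h1 h2 h3).n = p.n := rfl

lemma rot_x_lo (p : Pa G s) (i : ℕ) (h1 : 1 ≤ i) (h2 : i ≤ p.n) (h3) {t : ℕ}
    (ht : t ≤ i - 1) : (rot p i h1 h2 h3).x t = p.x (i - 1 - t) := by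
  simp only [rot, if_pos ht]

lemma rot_x_hi (p : Pa G s) (i : ℕ) (h1 : 1 ≤ i) (h2 : i ≤ p.n) (h3) {t : ℕ}
    (ht : i ≤ t) : (rot p i h1 h2 h3).x t = p.x t := by
  simp only [rot, if_neg (by omega : ¬ t ≤ i - 1)]

lemma rot_longest (p : Pa G s) (i : ℕ) (h1 : 1 ≤ i) (h2 : i ≤ p.n) (h3)
    (hp : IsLongest p) : IsLongest (rot p i h1 h2 h3) := fun q => hp q


lemma cyc_of_idx (p : Pa G s) (idx : ℕ → ℕ) (n : ℕ) (h3 : 3 ≤ n)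
    (hb : ∀ t, t < n → idx t ≤ p.n)
    (hinj : ∀ a b, a < n → b < n → idx a = idx b → a = b)
    (hadj : ∀ t, t + 1 < n → G.Adj (p.x (idx t)) (p.x (idx (t+1))))
    (hcl : G.Adj (p.x (idx (n-1))) (p.x (idx 0))) : G.HasCycleLength n := by
  apply hasCycleLength_fn (x := fun t => p.x (idx t)) n h3
  · intro a b ha hb' hab
    exact hinj a b ha hb' (p.inj _ _ (hb a ha) (hb b hb') hab)
  · exact hadj
  · exact hcl

section Tight

variable {d : ℕ}

/-- The key structure lemma for an endpoint of a longest path. -/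
lemma tight (hd4 : 4 ≤ d) (hd2 : d % 2 = 0)
    (hdeg : ∀ v ∈ s, ∃ T : Finset V, T ⊆ s ∧ d ≤ T.card ∧ ∀ w ∈ T, G.Adj v w)
    (hnc : ∀ n, n % 2 = 0 → d + 2 ≤ n → ¬ G.HasCycleLength n)
    (p : Pa G s) (hp : IsLongest p) :
    ∃ m₀, 2 ≤ m₀ ∧ m₀ % 2 = 0 ∧ m₀ + (d-2) ≤ p.n ∧
      (∀ i, i % 2 = 1 → i < d → G.Adj (p.x 0) (p.x i)) ∧
      (∀ j, j % 2 = 0 → m₀ ≤ j → j ≤ m₀ + (d-2) → G.Adj (p.x 0) (p.x j)) ∧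
      (∀ j, j % 2 = 0 → 1 ≤ j → j ≤ p.n → G.Adj (p.x 0) (p.x j) → m₀ ≤ j) := by
  classical
  set S : Finset ℕ := (Finset.Icc 1 p.n).filter (fun i => G.Adj (p.x 0) (p.x i)) with hS
  have hmemS : ∀ i, i ∈ S ↔ (1 ≤ i ∧ i ≤ p.n ∧ G.Adj (p.x 0) (p.x i)) := by
    intro i
    simp only [hS, Finset.mem_filter, Finset.mem_Icc]
    tauto
  -- d ≤ S.card
  obtain ⟨T, hTs, hTcard, hTadj⟩ := hdeg (p.x 0) (p.mem 0 (by omega))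
  have hsub : T ⊆ S.image p.x := by
    intro v hv
    obtain ⟨i, h1, h2, h3⟩ := closure p hp (hTs hv) (hTadj v hv)
    refine Finset.mem_image.2 ⟨i, ?_, h3⟩
    rw [hmemS]
    exact ⟨h1, h2, h3 ▸ hTadj v hv⟩
  have hScard : d ≤ S.card :=
    le_trans hTcard (le_trans (Finset.card_le_card hsub) Finset.card_image_le)
  -- T2 : odd positions are < d
  have hT2 : ∀ i ∈ S, i % 2 = 1 → i < d := by
    intro i hiS hodd
    by_contra hge
    push_neg at hge
    rw [hmemS] at hiS
    obtain ⟨hi1, hin, hiadj⟩ := hiS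
    have hcyc : G.HasCycleLength (i+1) := by
      apply hasCycleLength_fn (x := p.x) (n := i+1) (by omega)
      · intro a b ha hb hab
        exact p.inj a b (by omega) (by omega) hab
      · intro a ha
        exact p.adj a (by omega)
      · have h1 : i + 1 - 1 = i := by omega
        rw [h1]
        exact hiadj.symm
    exact hnc (i+1) (by omega) (by omega) hcyc
  -- T3 : same-parity positions are close
  have hT3 : ∀ i ∈ S, ∀ j ∈ S, i < j → i % 2 = j % 2 → j - i + 2 ≤ d := by
    intro i hiS j hjS hij hpar
    by_contra hge
    push_neg at hge
    rw [hmemS] at hiS hjS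
    obtain ⟨hi1, hin, hiadj⟩ := hiS
    obtain ⟨hj1, hjn, hjadj⟩ := hjS
    have hcyc : G.HasCycleLength (j - i + 2) := by
      apply cyc_of_idx p (fun t => if t = 0 then 0 else i + t - 1) (j - i + 2) (by omega)
      · intro t ht
        split_ifs <;> omega
      · intro a b ha hb hab
        split_ifs at hab <;> omega
      · intro t ht
        show G.Adj (p.x (if t = 0 then 0 else i + t - 1))
          (p.x (if t + 1 = 0 then 0 else i + (t+1) - 1))
        rw [if_neg (by omega : ¬ t + 1 = 0)]
        by_cases h0 : t = 0
        · rw [if_pos h0, show i + (t + 1) - 1 = i from by omega]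
          exact hiadj
        · rw [if_neg h0, show i + (t + 1) - 1 = (i + t - 1) + 1 from by omega]
          exact p.adj (i + t - 1) (by omega)
      · show G.Adj (p.x (if j - i + 2 - 1 = 0 then 0 else i + (j - i + 2 - 1) - 1))
          (p.x (if (0:ℕ) = 0 then 0 else i + 0 - 1))
        rw [if_neg (by omega : ¬ j - i + 2 - 1 = 0), if_pos rfl,
          show i + (j - i + 2 - 1) - 1 = j from by omega]
        exact hjadj.symm
    exact hnc (j - i + 2) (by omega) (by omega) hcyc
  -- split by parity
  set Sodd := S.filter (fun i => i % 2 = 1) with hSo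
  set Sev := S.filter (fun i => i % 2 = 0) with hSe
  have hsplit : Sodd.card + Sev.card = S.card := by
    have h1 : Sev = S.filter (fun i => ¬ i % 2 = 1) := by
      rw [hSe]
      exact Finset.filter_congr (fun x _ => by omega)
    rw [hSo, h1]
    exact Finset.card_filter_add_card_filter_not _
  have hOsub : Sodd ⊆ (Finset.range d).filter (fun i => i % 2 = 1) := by
    intro i hi
    simp only [hSo, Finset.mem_filter] at hi
    simp only [Finset.mem_filter, Finset.mem_range]
    exact ⟨hT2 i hi.1 hi.2, hi.2⟩
  have hOrange : ((Finset.range d).filter (fun i => i % 2 = 1)).card = d / 2 := by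
    have h := card_odd_range (d / 2)
    rw [show 2 * (d/2) = d by omega] at h
    exact h
  have hOcard : Sodd.card ≤ d / 2 := by
    have := Finset.card_le_card hOsub
    omega
  have hEne : Sev.Nonempty := by
    rw [← Finset.card_pos]
    omega
  set m₀ := Sev.min' hEne with hm0
  have hm0mem : m₀ ∈ Sev := Finset.min'_mem _ _
  have hm0S : m₀ ∈ S := Finset.mem_of_mem_filter _ hm0mem
  have hm0ev : m₀ % 2 = 0 := (Finset.mem_filter.1 hm0mem).2
  have hm0min : ∀ j ∈ Sev, m₀ ≤ j := fun j hj => Finset.min'_le _ _ hj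
  have hEsub : Sev ⊆ (Finset.Icc m₀ (m₀ + (d-2))).filter (fun i => i % 2 = 0) := by
    intro j hj
    have hj2 : j % 2 = 0 := (Finset.mem_filter.1 hj).2
    have hjS : j ∈ S := Finset.mem_of_mem_filter _ hj
    simp only [Finset.mem_filter, Finset.mem_Icc]
    refine ⟨⟨hm0min j hj, ?_⟩, hj2⟩
    rcases eq_or_lt_of_le (hm0min j hj) with h | h
    · omega
    · have := hT3 m₀ hm0S j hjS h (by omega)
      omega
  have hEIcc : ((Finset.Icc m₀ (m₀ + (d-2))).filter (fun i => i % 2 = 0)).card = d / 2 := by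
    have h := card_even_Icc m₀ (d/2 - 1) hm0ev
    rw [show m₀ + 2 * (d/2 - 1) = m₀ + (d - 2) by omega] at h
    omega
  have hEcard : Sev.card ≤ d / 2 := by
    have := Finset.card_le_card hEsub
    omega
  have hEeq : Sev = (Finset.Icc m₀ (m₀ + (d-2))).filter (fun i => i % 2 = 0) := by
    apply Finset.eq_of_subset_of_card_le hEsub
    omega
  have hOeq : Sodd = (Finset.range d).filter (fun i => i % 2 = 1) := by
    apply Finset.eq_of_subset_of_card_le hOsub
    omega
  -- conclusions
  have hm0n : m₀ + (d-2) ≤ p.n := by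
    have hmem : m₀ + (d-2) ∈ Sev := by
      rw [hEeq]
      simp only [Finset.mem_filter, Finset.mem_Icc]
      omega
    have := (hmemS _).1 (Finset.mem_of_mem_filter _ hmem)
    omega
  refine ⟨m₀, by have := (hmemS _).1 hm0S; omega, hm0ev, hm0n, ?_, ?_, ?_⟩
  · intro i hodd hid
    have hmem : i ∈ Sodd := by
      rw [hOeq]
      simp only [Finset.mem_filter, Finset.mem_range]
      exact ⟨hid, hodd⟩
    exact ((hmemS _).1 (Finset.mem_of_mem_filter _ hmem)).2.2
  · intro j hev h1 h2
    have hmem : j ∈ Sev := by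
      rw [hEeq]
      simp only [Finset.mem_filter, Finset.mem_Icc]
      exact ⟨⟨h1, h2⟩, hev⟩
    exact ((hmemS _).1 (Finset.mem_of_mem_filter _ hmem)).2.2
  · intro j hev h1 h2 hadj
    apply hm0min
    simp only [hSe, Finset.mem_filter]
    exact ⟨(hmemS j).2 ⟨h1, h2, hadj⟩, hev⟩

end Tight

section Kills

variable {d : ℕ}

/-- All the standing hypotheses, packaged -/
structure Hyp (G : SimpleGraph V) (s : Finset V) (d : ℕ) : Prop where
  hd4 : 4 ≤ d
  hd2 : d % 2 = 0
  hdeg : ∀ v ∈ s, ∃ T : Finset V, T ⊆ s ∧ d ≤ T.card ∧ ∀ w ∈ T, G.Adj v w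
  hnc : ∀ n, n % 2 = 0 → d + 2 ≤ n → ¬ G.HasCycleLength n

/-- complete bipartite structure on the first d vertices of a longest path -/
lemma F2 (H : Hyp G s d) (p : Pa G s) (hp : IsLongest p) :
    ∀ i j, i % 2 = 0 → i + 2 ≤ d → j % 2 = 1 → j < d → G.Adj (p.x i) (p.x j) := by
  intro i j hie hid hjo hjd
  obtain ⟨m₀, hm2, hmev, hmn, PA, PB, PBmin⟩ := tight H.hd4 H.hd2 H.hdeg H.hnc p hp
  have hd4 := H.hd4
  have hd2 := H.hd2
  have hdn : d ≤ p.n := by omega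
  by_cases h0 : i = 0
  · subst h0
    exact PA j hjo hjd
  · have hadj : G.Adj (p.x 0) (p.x (i+1)) := PA (i+1) (by omega) (by omega)
    have hr1 : 1 ≤ i + 1 := by omega
    have hr2 : i + 1 ≤ p.n := by omega
    obtain ⟨m', _, _, _, PA', _, _⟩ :=
      tight H.hd4 H.hd2 H.hdeg H.hnc (rot p (i+1) hr1 hr2 hadj)
        (rot_longest p (i+1) hr1 hr2 hadj hp)
    have e0 : (rot p (i+1) hr1 hr2 hadj).x 0 = p.x i := by
      rw [rot_x_lo p (i+1) hr1 hr2 hadj (by omega),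
        show i + 1 - 1 - 0 = i from by omega]
    by_cases hij : j < i
    · have := PA' (i - j) (by omega) (by omega)
      rw [e0, rot_x_lo p (i+1) hr1 hr2 hadj (by omega : i - j ≤ i + 1 - 1)] at this
      rwa [show i + 1 - 1 - (i - j) = j from by omega] at this
    · have := PA' j hjo hjd
      rwa [e0, rot_x_hi p (i+1) hr1 hr2 hadj (by omega : i + 1 ≤ j)] at this

/-- Kill when the even window starts in [4, d+2] -/
lemma killA (H : Hyp G s d) (p : Pa G s) (hp : IsLongest p)
    (m₀ : ℕ) (hmev : m₀ % 2 = 0) (hmn : m₀ + (d-2) ≤ p.n)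
    (PA : ∀ i, i % 2 = 1 → i < d → G.Adj (p.x 0) (p.x i))
    (PB : ∀ j, j % 2 = 0 → m₀ ≤ j → j ≤ m₀ + (d-2) → G.Adj (p.x 0) (p.x j))
    (h4 : 4 ≤ m₀) (hle : m₀ ≤ d + 2) : False := by
  have hd4 := H.hd4
  have hd2 := H.hd2
  have hch : G.Adj (p.x 0) (p.x (d+2)) := PB (d+2) (by omega) (by omega) (by omega)
  have hr1 : 1 ≤ d + 2 := by omega
  have hr2 : d + 2 ≤ p.n := by omega
  obtain ⟨m', _, _, _, PA', _, _⟩ :=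
    tight H.hd4 H.hd2 H.hdeg H.hnc (rot p (d+2) hr1 hr2 hch)
      (rot_longest p (d+2) hr1 hr2 hch hp)
  have hder : G.Adj (p.x (d+1)) (p.x 2) := by
    have := PA' (d-1) (by omega) (by omega)
    rw [rot_x_lo p (d+2) hr1 hr2 hch (by omega : (0:ℕ) ≤ d + 2 - 1),
      rot_x_lo p (d+2) hr1 hr2 hch (by omega : d - 1 ≤ d + 2 - 1)] at this
    rwa [show d + 2 - 1 - 0 = d + 1 from by omega,
      show d + 2 - 1 - (d - 1) = 2 from by omega] at this
  -- cycle [d+1, 2, 1, 0, 3, 4, ..., d]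
  have hcyc : G.HasCycleLength (d+2) := by
    apply cyc_of_idx p
      (fun t => if t = 0 then d+1 else if t = 1 then 2 else if t = 2 then 1
        else if t = 3 then 0 else t - 1) (d+2) (by omega)
    · intro t ht
      split_ifs <;> omega
    · intro a b ha hb hab
      split_ifs at hab <;> omega
    · intro t ht
      rcases Nat.lt_or_ge t 4 with h4t | h4t
      · interval_cases t
        · simpa using hder
        · simpa using (p.adj 1 (by omega)).symm
        · simpa using (p.adj 0 (by omega)).symm
        · simpa using PA 3 (by omega) (by omega)
      · rw [if_neg (by omega : ¬ t = 0), if_neg (by omega : ¬ t = 1),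
          if_neg (by omega : ¬ t = 2), if_neg (by omega : ¬ t = 3),
          if_neg (by omega : ¬ t+1 = 0), if_neg (by omega : ¬ t+1 = 1),
          if_neg (by omega : ¬ t+1 = 2), if_neg (by omega : ¬ t+1 = 3),
          show t + 1 - 1 = (t-1)+1 from by omega]
        exact p.adj (t-1) (by omega)
    · rw [if_neg (by omega : ¬ d+2-1 = 0), if_neg (by omega : ¬ d+2-1 = 1),
        if_neg (by omega : ¬ d+2-1 = 2), if_neg (by omega : ¬ d+2-1 = 3),
        if_pos (rfl : (0:ℕ) = 0), show d+2-1-1 = d from by omega]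
      exact p.adj d (by omega)
  exact H.hnc (d+2) (by omega) (by omega) hcyc

/-- Kill when the even window starts in [d+4, 2d-2] -/
lemma killB (H : Hyp G s d) (p : Pa G s) (hp : IsLongest p)
    (m₀ : ℕ) (hmev : m₀ % 2 = 0) (hmn : m₀ + (d-2) ≤ p.n)
    (PA : ∀ i, i % 2 = 1 → i < d → G.Adj (p.x 0) (p.x i))
    (PB : ∀ j, j % 2 = 0 → m₀ ≤ j → j ≤ m₀ + (d-2) → G.Adj (p.x 0) (p.x j))
    (h4 : d + 4 ≤ m₀) (hle : m₀ ≤ 2*d - 2) : False := by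
  have hd4 := H.hd4
  have hd2 := H.hd2
  have hch : G.Adj (p.x 0) (p.x m₀) := PB m₀ hmev (le_refl _) (by omega)
  have hr1 : 1 ≤ m₀ := by omega
  have hr2 : m₀ ≤ p.n := by omega
  obtain ⟨m', _, _, _, PA', _, _⟩ :=
    tight H.hd4 H.hd2 H.hdeg H.hnc (rot p m₀ hr1 hr2 hch)
      (rot_longest p m₀ hr1 hr2 hch hp)
  have hder : G.Adj (p.x (m₀-1)) (p.x (m₀-d)) := by
    have := PA' (d-1) (by omega) (by omega)
    rw [rot_x_lo p m₀ hr1 hr2 hch (by omega : (0:ℕ) ≤ m₀ - 1),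
      rot_x_lo p m₀ hr1 hr2 hch (by omega : d - 1 ≤ m₀ - 1)] at this
    rwa [show m₀ - 1 - 0 = m₀ - 1 from by omega,
      show m₀ - 1 - (d - 1) = m₀ - d from by omega] at this
  -- cycle [m₀-1, m₀-d, m₀-d-1, ..., 1, 0, m₀-d+1, m₀-d+2, ..., m₀-2], length m₀
  have hcyc : G.HasCycleLength m₀ := by
    apply cyc_of_idx p
      (fun t => if t = 0 then m₀-1 else if t ≤ m₀-d+1 then m₀-d-(t-1) else t - 1)
      m₀ (by omega)
    · intro t ht
      split_ifs <;> omega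
    · intro a b ha hb hab
      split_ifs at hab <;> omega
    · intro t ht
      by_cases h0 : t = 0
      · subst h0
        rw [if_pos rfl, if_neg (by omega : ¬ (0:ℕ)+1 = 0),
          if_pos (by omega : (0:ℕ)+1 ≤ m₀-d+1),
          show m₀ - d - (0+1-1) = m₀ - d from by omega]
        exact hder
      · rw [if_neg h0, if_neg (by omega : ¬ t+1 = 0)]
        by_cases h1 : t + 1 ≤ m₀ - d + 1
        · rw [if_pos (by omega : t ≤ m₀-d+1), if_pos h1,
            show m₀ - d - (t-1) = (m₀ - d - (t+1-1)) + 1 from by omega]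
          exact (p.adj (m₀ - d - (t+1-1)) (by omega)).symm
        · by_cases h2 : t ≤ m₀ - d + 1
          · -- t = m₀-d+1 : from x 0 to x (m₀-d+1)
            rw [if_pos h2, if_neg h1,
              show m₀ - d - (t-1) = 0 from by omega,
              show t + 1 - 1 = m₀ - d + 1 from by omega]
            exact PA (m₀-d+1) (by omega) (by omega)
          · rw [if_neg h2, if_neg h1, show t + 1 - 1 = (t-1)+1 from by omega]
            exact p.adj (t-1) (by omega)
    · rw [if_neg (by omega : ¬ m₀ - 1 = 0), if_neg (by omega : ¬ m₀ - 1 ≤ m₀ - d + 1),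
        if_pos rfl, show m₀ - 1 - 1 = m₀ - 2 from by omega,
        show m₀ - 1 = m₀ - 2 + 1 from by omega]
      exact (p.adj (m₀ - 2) (by omega))
  exact H.hnc m₀ (by omega) (by omega) hcyc

/-- cycle for the descend kill (window of rotated path starts at 2) -/
lemma cycDescend (H : Hyp G s d) (p : Pa G s) (m₀ : ℕ) (hmev : m₀ % 2 = 0)
    (hm : m₀ ≤ p.n) (h2d : 2*d ≤ m₀)
    (hch : G.Adj (p.x 0) (p.x m₀))
    (hder : G.Adj (p.x (m₀ - 1)) (p.x (m₀ - 3))) : False := by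
  have hd4 := H.hd4
  have hd2 := H.hd2
  have hcyc : G.HasCycleLength m₀ := by
    apply cyc_of_idx p
      (fun t => if t = 0 then m₀ else if t = 1 then m₀ - 1 else m₀ - 1 - t) m₀ (by omega)
    · intro t ht
      split_ifs <;> omega
    · intro a b ha hb hab
      split_ifs at hab <;> omega
    · intro t ht
      by_cases h0 : t = 0
      · subst h0
        rw [if_pos rfl, if_neg (by omega : ¬ (0:ℕ)+1 = 0), if_pos rfl,
          show m₀ = (m₀ - 1) + 1 from by omega]
        exact (p.adj (m₀ - 1) (by omega)).symm
      · by_cases h1 : t = 1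
        · subst h1
          rw [if_neg (by omega : ¬ (1:ℕ) = 0), if_pos rfl,
            if_neg (by omega : ¬ (1:ℕ)+1 = 0), if_neg (by omega : ¬ (1:ℕ)+1 = 1),
            show m₀ - 1 - (1+1) = m₀ - 3 from by omega]
          exact hder
        · rw [if_neg h0, if_neg h1, if_neg (by omega : ¬ t+1 = 0),
            if_neg (by omega : ¬ t+1 = 1),
            show m₀ - 1 - t = (m₀ - 1 - (t+1)) + 1 from by omega]
          exact (p.adj (m₀ - 1 - (t+1)) (by omega)).symm
    · rw [if_neg (by omega : ¬ m₀ - 1 = 0), if_neg (by omega : ¬ m₀ - 1 = 1),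
        if_pos rfl, show m₀ - 1 - (m₀ - 1) = 0 from by omega]
      exact hch
  exact H.hnc m₀ (by omega) (by omega) hcyc

/-- cycle for the bottom kill (downward chord landing low) -/
lemma cycBottom (H : Hyp G s d) (p : Pa G s) (m₀ qq : ℕ)
    (hm : m₀ ≤ p.n) (h2d : 2*d ≤ m₀) (hqqodd : qq % 2 = 1) (hsmall : qq < d - 1)
    (hch : G.Adj (p.x 0) (p.x m₀))
    (hder : G.Adj (p.x (m₀ - 1)) (p.x qq))
    (hF2 : G.Adj (p.x (qq + 1)) (p.x 1))
    (hPA : G.Adj (p.x 0) (p.x (d-1))) : False := by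
  have hd4 := H.hd4
  have hd2 := H.hd2
  have hcyc : G.HasCycleLength (d+2) := by
    apply cyc_of_idx p
      (fun t => if t = 0 then m₀ else if t = 1 then m₀ - 1 else if t ≤ qq + 1 then qq + 2 - t
        else if t ≤ d then t - 1 else 0) (d+2) (by omega)
    · intro t ht
      split_ifs <;> omega
    · intro a b ha hb hab
      split_ifs at hab <;> omega
    · intro t ht
      by_cases h0 : t = 0
      · subst h0
        rw [if_pos rfl, if_neg (by omega : ¬ (0:ℕ)+1 = 0), if_pos rfl,
          show m₀ = (m₀ - 1) + 1 from by omega]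
        exact (p.adj (m₀ - 1) (by omega)).symm
      · by_cases h1 : t = 1
        · subst h1
          rw [if_neg (by omega : ¬ (1:ℕ) = 0), if_pos rfl,
            if_neg (by omega : ¬ (1:ℕ)+1 = 0), if_neg (by omega : ¬ (1:ℕ)+1 = 1),
            if_pos (by omega : (1:ℕ)+1 ≤ qq+1), show qq + 2 - (1+1) = qq from by omega]
          exact hder
        · rw [if_neg h0, if_neg h1, if_neg (by omega : ¬ t+1 = 0), if_neg (by omega : ¬ t+1 = 1)]
          by_cases h2 : t + 1 ≤ qq + 1
          · rw [if_pos (by omega : t ≤ qq + 1), if_pos h2,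
              show qq + 2 - t = (qq + 2 - (t+1)) + 1 from by omega]
            exact (p.adj (qq + 2 - (t+1)) (by omega)).symm
          · by_cases h3 : t ≤ qq + 1
            · rw [if_pos h3, if_neg h2, if_pos (by omega : t + 1 ≤ d),
                show qq + 2 - t = 1 from by omega, show t + 1 - 1 = qq + 1 from by omega]
              exact hF2.symm
            · by_cases h4 : t + 1 ≤ d
              · rw [if_neg h3, if_pos (by omega : t ≤ d), if_neg h2, if_pos h4,
                  show t + 1 - 1 = (t - 1) + 1 from by omega]
                exact p.adj (t-1) (by omega)
              · rw [if_neg h3, if_pos (by omega : t ≤ d), if_neg h2, if_neg h4,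
                  show t - 1 = d - 1 from by omega]
                exact hPA.symm
    · rw [if_neg (by omega : ¬ d + 2 - 1 = 0), if_neg (by omega : ¬ d + 2 - 1 = 1),
        if_neg (by omega : ¬ d + 2 - 1 ≤ qq + 1), if_neg (by omega : ¬ d + 2 - 1 ≤ d),
        if_pos rfl]
      exact hch
  exact H.hnc (d+2) (by omega) (by omega) hcyc

/-- cycle for the long downward chord kill -/
lemma cycQ (H : Hyp G s d) (p : Pa G s) (m₀ qq : ℕ)
    (hm : m₀ ≤ p.n) (h2d : 2*d ≤ m₀) (hqqodd : qq % 2 = 1)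
    (hbig : d - 1 ≤ qq) (hqlt : qq + 1 < m₀)
    (hch : G.Adj (p.x 0) (p.x m₀))
    (hder : G.Adj (p.x (m₀ - 1)) (p.x qq)) : False := by
  have hd4 := H.hd4
  have hd2 := H.hd2
  have hcyc : G.HasCycleLength (qq + 3) := by
    apply cyc_of_idx p
      (fun t => if t = 0 then m₀ else if t = 1 then m₀ - 1 else qq + 2 - t) (qq+3) (by omega)
    · intro t ht
      split_ifs <;> omega
    · intro a b ha hb hab
      split_ifs at hab <;> omega
    · intro t ht
      by_cases h0 : t = 0
      · subst h0
        rw [if_pos rfl, if_neg (by omega : ¬ (0:ℕ)+1 = 0), if_pos rfl,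
          show m₀ = (m₀ - 1) + 1 from by omega]
        exact (p.adj (m₀ - 1) (by omega)).symm
      · by_cases h1 : t = 1
        · subst h1
          rw [if_neg (by omega : ¬ (1:ℕ) = 0), if_pos rfl,
            if_neg (by omega : ¬ (1:ℕ)+1 = 0), if_neg (by omega : ¬ (1:ℕ)+1 = 1),
            show qq + 2 - (1+1) = qq from by omega]
          exact hder
        · rw [if_neg h0, if_neg h1, if_neg (by omega : ¬ t+1 = 0),
            if_neg (by omega : ¬ t+1 = 1),
            show qq + 2 - t = (qq + 2 - (t+1)) + 1 from by omega]
          exact (p.adj (qq + 2 - (t+1)) (by omega)).symm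
    · rw [if_neg (by omega : ¬ qq + 3 - 1 = 0), if_neg (by omega : ¬ qq + 3 - 1 = 1),
        show qq + 2 - (qq + 3 - 1) = 0 from by omega]
      exact hch
  exact H.hnc (qq+3) (by omega) (by omega) hcyc

/-- cycle for the band kill -/
lemma cycBand (H : Hyp G s d) (p : Pa G s) (m₀ : ℕ) (hmev : m₀ % 2 = 0)
    (hm : m₀ + 2 ≤ p.n) (h2d : 2*d ≤ m₀)
    (hch : G.Adj (p.x 0) (p.x m₀))
    (hder2 : G.Adj (p.x (m₀ + 1)) (p.x (d - 3)))
    (hF2 : G.Adj (p.x (d-4)) (p.x (d-1)))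
    (hPA : G.Adj (p.x 0) (p.x (d-1))) : False := by
  have hd4 := H.hd4
  have hd2 := H.hd2
  have hcyc : G.HasCycleLength (d+2) := by
    apply cyc_of_idx p
      (fun t => if t = 0 then m₀ else if t = 1 then m₀ + 1 else if t = 2 then d - 3
        else if t = 3 then d - 2 else if t = 4 then d - 1 else d + 1 - t) (d+2) (by omega)
    · intro t ht
      split_ifs <;> omega
    · intro a b ha hb hab
      split_ifs at hab <;> omega
    · intro t ht
      rcases Nat.lt_or_ge t 5 with h5t | h5t
      · interval_cases t
        · simpa using p.adj m₀ (by omega)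
        · simpa using hder2
        · simp only [reduceIte]
          rw [show d - 2 = (d - 3) + 1 from by omega]
          exact p.adj (d-3) (by omega)
        · simp only [reduceIte]
          rw [show d - 1 = (d - 2) + 1 from by omega]
          exact p.adj (d-2) (by omega)
        · simp only [reduceIte]
          rw [show d + 1 - (4+1) = d - 4 from by omega]
          exact hF2.symm
      · rw [if_neg (by omega : ¬ t = 0), if_neg (by omega : ¬ t = 1),
          if_neg (by omega : ¬ t = 2), if_neg (by omega : ¬ t = 3),
          if_neg (by omega : ¬ t = 4), if_neg (by omega : ¬ t+1 = 0),
          if_neg (by omega : ¬ t+1 = 1), if_neg (by omega : ¬ t+1 = 2),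
          if_neg (by omega : ¬ t+1 = 3), if_neg (by omega : ¬ t+1 = 4)]
        by_cases h6 : t + 1 = d + 1
        · rw [h6, show d + 1 - (d+1) = 0 from by omega,
            show d + 1 - t = 1 from by omega]
          exact (p.adj 0 (by omega)).symm
        · rw [show d + 1 - t = (d + 1 - (t+1)) + 1 from by omega]
          exact (p.adj (d + 1 - (t+1)) (by omega)).symm
    · rw [if_neg (by omega : ¬ d+2-1 = 0), if_neg (by omega : ¬ d+2-1 = 1),
        if_neg (by omega : ¬ d+2-1 = 2), if_neg (by omega : ¬ d+2-1 = 3),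
        if_neg (by omega : ¬ d+2-1 = 4),
        show d + 1 - (d + 2 - 1) = 0 from by omega]
      exact hch
  exact H.hnc (d+2) (by omega) (by omega) hcyc

/-- Kill when the even window starts at ≥ 2d -/
lemma killC (H : Hyp G s d) (p : Pa G s) (hp : IsLongest p)
    (m₀ : ℕ) (hmev : m₀ % 2 = 0) (hmn : m₀ + (d-2) ≤ p.n)
    (PA : ∀ i, i % 2 = 1 → i < d → G.Adj (p.x 0) (p.x i))
    (PB : ∀ j, j % 2 = 0 → m₀ ≤ j → j ≤ m₀ + (d-2) → G.Adj (p.x 0) (p.x j))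
    (h2d : 2*d ≤ m₀) : False := by
  have hd4 := H.hd4
  have hd2 := H.hd2
  have hch : G.Adj (p.x 0) (p.x m₀) := PB m₀ hmev (le_refl _) (by omega)
  have hr1 : 1 ≤ m₀ := by omega
  have hr2 : m₀ ≤ p.n := by omega
  set q := rot p m₀ hr1 hr2 hch with hq
  have hqL : IsLongest q := rot_longest p m₀ hr1 hr2 hch hp
  obtain ⟨m', h2', hev', hn', PA', PB', PBmin'⟩ := tight H.hd4 H.hd2 H.hdeg H.hnc q hqL
  have hqn : q.n = p.n := rfl
  rw [hqn] at hn'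
  have hqlo : ∀ t, t ≤ m₀ - 1 → q.x t = p.x (m₀ - 1 - t) := by
    intro t ht
    rw [hq, rot_x_lo p m₀ hr1 hr2 hch ht]
  have hqhi : ∀ t, m₀ ≤ t → q.x t = p.x t := by
    intro t ht
    rw [hq, rot_x_hi p m₀ hr1 hr2 hch ht]
  have hq0 : q.x 0 = p.x (m₀ - 1) := by
    rw [hqlo 0 (by omega), show m₀ - 1 - 0 = m₀ - 1 from by omega]
  -- m' ≤ m₀
  have hm'le : m' ≤ m₀ := by
    apply PBmin' m₀ hmev (by omega) (by omega)
    rw [hq0, hqhi m₀ (le_refl _), show m₀ = (m₀ - 1) + 1 from by omega]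
    exact p.adj (m₀ - 1) (by omega)
  -- case split on m'
  have hcases : m' = 2 ∨ (4 ≤ m' ∧ m' ≤ d + 2) ∨ (d + 4 ≤ m' ∧ m' ≤ 2*d - 2)
      ∨ (2*d ≤ m' ∧ m' ≤ m₀ - 2) ∨ m' = m₀ := by omega
  rcases hcases with hc | hc | hc | hc | hc
  · -- m' = 2 : descend kill
    have hder : G.Adj (p.x (m₀ - 1)) (p.x (m₀ - 3)) := by
      have := PB' 2 (by omega) (by omega) (by omega)
      rwa [hq0, hqlo 2 (by omega), show m₀ - 1 - 2 = m₀ - 3 from by omega] at this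
    exact cycDescend H p m₀ hmev hr2 h2d hch hder
  · exact killA H q hqL m' hev' (by omega) PA' PB' (by omega) (by omega)
  · exact killB H q hqL m' hev' (by omega) PA' PB' (by omega) (by omega)
  · -- downward chord to qq := m₀ - 1 - m'
    have hder : G.Adj (p.x (m₀ - 1)) (p.x (m₀ - 1 - m')) := by
      have := PB' m' hev' (le_refl _) (by omega)
      rwa [hq0, hqlo m' (by omega)] at this
    rcases Nat.lt_or_ge (m₀ - 1 - m') (d - 1) with hsmall | hbig
    · exact cycBottom H p m₀ (m₀ - 1 - m') hr2 h2d (by omega) hsmall hch hder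
        (F2 H p hp (m₀ - 1 - m' + 1) 1 (by omega) (by omega) (by omega) (by omega))
        (PA (d-1) (by omega) (by omega))
    · exact cycQ H p m₀ (m₀ - 1 - m') hr2 h2d (by omega) hbig (by omega) hch hder
  · -- m' = m₀ : band kill (double rotation)
    subst hc
    have hderq : G.Adj (q.x 0) (q.x (m' + 2)) := PB' (m'+2) (by omega) (by omega) (by omega)
    have hs1 : 1 ≤ m' + 2 := by omega
    have hs2 : m' + 2 ≤ q.n := by omega
    set r := rot q (m'+2) hs1 hs2 hderq with hr
    have hrL : IsLongest r := rot_longest q (m'+2) hs1 hs2 hderq hqL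
    obtain ⟨m'', _, _, _, PA'', _, _⟩ := tight H.hd4 H.hd2 H.hdeg H.hnc r hrL
    have hder2 : G.Adj (p.x (m' + 1)) (p.x (d - 3)) := by
      have := PA'' (d-1) (by omega) (by omega)
      rw [hr, rot_x_lo q (m'+2) hs1 hs2 hderq (by omega : (0:ℕ) ≤ m' + 2 - 1),
        rot_x_lo q (m'+2) hs1 hs2 hderq (by omega : d - 1 ≤ m' + 2 - 1),
        show m' + 2 - 1 - 0 = m' + 1 from by omega,
        show m' + 2 - 1 - (d - 1) = m' + 2 - d from by omega,
        hqhi (m'+1) (by omega), hqlo (m' + 2 - d) (by omega),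
        show m' - 1 - (m' + 2 - d) = d - 3 from by omega] at this
      exact this
    exact cycBand H p m' hmev (by omega) h2d hch hder2
      (F2 H p hp (d-4) (d-1) (by omega) (by omega) (by omega) (by omega))
      (PA (d-1) (by omega) (by omega))

/-- Master: every longest path endpoint is adjacent to the first d path vertices. -/
lemma master (H : Hyp G s d) (p : Pa G s) (hp : IsLongest p) :
    d ≤ p.n ∧ ∀ t, 1 ≤ t → t ≤ d → G.Adj (p.x 0) (p.x t) := by
  have hd4 := H.hd4
  have hd2 := H.hd2
  obtain ⟨m₀, hm2, hmev, hmn, PA, PB, PBmin⟩ := tight H.hd4 H.hd2 H.hdeg H.hnc p hp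
  have hm0 : m₀ = 2 := by
    by_contra hne
    have h4 : 4 ≤ m₀ := by omega
    have hcases : (4 ≤ m₀ ∧ m₀ ≤ d + 2) ∨ (d + 4 ≤ m₀ ∧ m₀ ≤ 2*d - 2) ∨ 2*d ≤ m₀ := by omega
    rcases hcases with hc | hc | hc
    · exact killA H p hp m₀ hmev hmn PA PB hc.1 hc.2
    · exact killB H p hp m₀ hmev hmn PA PB hc.1 hc.2
    · exact killC H p hp m₀ hmev hmn PA PB hc
  subst hm0
  refine ⟨by omega, ?_⟩
  intro t h1 h2
  rcases Nat.even_or_odd t with he | ho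
  · have hte := Nat.even_iff.1 he
    exact PB t hte (by omega) (by omega)
  · have hto := Nat.odd_iff.1 ho
    exact PA t hto (by omega)

/-- Main structural lemma: min degree ≥ d and no long even cycles forces a (d+1)-clique. -/
lemma lemmaB (H : Hyp G s d) (hs : s.Nonempty) :
    ∃ t : Finset V, G.IsNClique (d+1) t := by
  classical
  have hd4 := H.hd4
  have hd2 := H.hd2
  obtain ⟨p, hp⟩ := exists_longest (G := G) hs
  obtain ⟨hdn, hadj⟩ := master H p hp
  -- all pairs in positions [0, d] are adjacent
  have hpair : ∀ a b, a < b → b ≤ d → G.Adj (p.x a) (p.x b) := by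
    intro a b hab hbd
    rcases Nat.eq_zero_or_pos a with h0 | h1
    · subst h0
      exact hadj b (by omega) hbd
    · have hch : G.Adj (p.x 0) (p.x (a+1)) := hadj (a+1) (by omega) (by omega)
      have hr1 : 1 ≤ a + 1 := by omega
      have hr2 : a + 1 ≤ p.n := by omega
      obtain ⟨_, hadj'⟩ := master H (rot p (a+1) hr1 hr2 hch)
        (rot_longest p (a+1) hr1 hr2 hch hp)
      have := hadj' b (by omega) hbd
      rwa [rot_x_lo p (a+1) hr1 hr2 hch (by omega : (0:ℕ) ≤ a + 1 - 1),
        show a + 1 - 1 - 0 = a from by omega,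
        rot_x_hi p (a+1) hr1 hr2 hch (by omega : a + 1 ≤ b)] at this
  refine ⟨(Finset.range (d+1)).image p.x, ?_⟩
  constructor
  · -- clique
    intro u hu v hv huv
    simp only [Finset.coe_image, Set.mem_image, Finset.mem_coe, Finset.mem_range] at hu hv
    obtain ⟨a, ha, rfl⟩ := hu
    obtain ⟨b, hb, rfl⟩ := hv
    rcases Nat.lt_trichotomy a b with h | h | h
    · exact hpair a b h (by omega)
    · exact absurd (congrArg p.x h) huv
    · exact (hpair b a h (by omega)).symm
  · rw [Finset.card_image_of_injOn, Finset.card_range]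
    intro a ha b hb hab
    simp only [Finset.coe_range, Set.mem_Iio] at ha hb
    exact p.inj a b (by omega) (by omega) hab

end Kills

lemma exists_coloring (G : SimpleGraph V) [Fintype V] (d : ℕ) (hd4 : 4 ≤ d) (hd2 : d % 2 = 0)
    (hnc : ∀ n, n % 2 = 0 → d + 2 ≤ n → ¬ G.HasCycleLength n)
    (hnk : ∀ t : Finset V, ¬ G.IsNClique (d+1) t) :
    ∀ (N : ℕ) (s : Finset V), s.card ≤ N →
      ∃ c : V → Fin d, ∀ a b, a ∈ s → b ∈ s → G.Adj a b → c a ≠ c b := by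
  classical
  intro N
  induction N with
  | zero =>
    intro s hs
    refine ⟨fun _ => ⟨0, by omega⟩, ?_⟩
    intro a b ha hb
    rw [Nat.le_zero, Finset.card_eq_zero] at hs
    simp [hs] at ha
  | succ N ih =>
    intro s hs
    by_cases hse : s.Nonempty
    · have hlow : ∃ v ∈ s, (s.filter (G.Adj v)).card < d := by
        by_contra hcon
        push_neg at hcon
        have hdeg : ∀ v ∈ s, ∃ T : Finset V, T ⊆ s ∧ d ≤ T.card ∧ ∀ w ∈ T, G.Adj v w := by
          intro v hv
          exact ⟨s.filter (G.Adj v), Finset.filter_subset _ _, hcon v hv,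
            fun w hw => (Finset.mem_filter.1 hw).2⟩
        obtain ⟨t, ht⟩ := lemmaB ⟨hd4, hd2, hdeg, hnc⟩ hse
        exact hnk t ht
      obtain ⟨v, hvs, hvdeg⟩ := hlow
      obtain ⟨c₀, hc₀⟩ := ih (s.erase v) (by
        have := Finset.card_erase_of_mem hvs
        omega)
      set T : Finset (Fin d) := ((s.filter (G.Adj v)).image c₀) with hT
      have hTcard : T.card < d := lt_of_le_of_lt Finset.card_image_le hvdeg
      have hTne : (Finset.univ \ T).Nonempty := by
        rw [← Finset.card_pos, Finset.card_sdiff_of_subset (Finset.subset_univ _)]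
        simp only [Finset.card_univ, Fintype.card_fin]
        omega
      obtain ⟨k, hk⟩ := hTne
      have hknot : k ∉ T := (Finset.mem_sdiff.1 hk).2
      refine ⟨Function.update c₀ v k, ?_⟩
      intro a b ha hb hab
      by_cases hav : a = v <;> by_cases hbv : b = v
      · subst hav; subst hbv; exact absurd hab (G.irrefl)
      · subst hav
        rw [Function.update_self, Function.update_of_ne hbv]
        intro hbad
        exact hknot (hT ▸ Finset.mem_image.2 ⟨b, Finset.mem_filter.2 ⟨hb, hab⟩, hbad.symm⟩)
      · subst hbv
        rw [Function.update_of_ne hav, Function.update_self]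
        intro hbad
        exact hknot (hT ▸ Finset.mem_image.2 ⟨a, Finset.mem_filter.2 ⟨ha, hab.symm⟩, hbad⟩)
      · rw [Function.update_of_ne hav, Function.update_of_ne hbv]
        exact hc₀ a b (Finset.mem_erase.2 ⟨hav, ha⟩) (Finset.mem_erase.2 ⟨hbv, hb⟩) hab
    · refine ⟨fun _ => ⟨0, by omega⟩, ?_⟩
      intro a b ha hb hab
      exact absurd ⟨a, ha⟩ hse

end EvenCyc

private theorem chromatic_le_longest_even_cycle' {V : Type*} [Fintype V]
    (G : SimpleGraph V) (le : ℕ)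
    (hle_even : Even le) (hle_cyc : G.HasCycleLength le)
    (hle_max : ∀ n, Even n → G.HasCycleLength n → n ≤ le)
    (hw : G.cliqueNum ≤ le) :
    G.chromaticNumber ≤ (le : ℕ∞) := by
  classical
  obtain ⟨v, c, hc, hlen⟩ := hle_cyc
  have h3 : 3 ≤ le := hlen ▸ hc.three_le_length
  have hd2 : le % 2 = 0 := Nat.even_iff.1 hle_even
  have hd4 : 4 ≤ le := by omega
  have hnc : ∀ n, n % 2 = 0 → le + 2 ≤ n → ¬ G.HasCycleLength n := by
    intro n hn hln hcyc
    have := hle_max n (Nat.even_iff.2 hn) hcyc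
    omega
  have hnk : ∀ t : Finset V, ¬ G.IsNClique (le+1) t := by
    intro t ht
    have h1 : t.card ≤ G.cliqueNum :=
      SimpleGraph.IsClique.card_le_cliqueNum (G := G) (tc := ht.1)
    have h2 : t.card = le + 1 := ht.2
    omega
  obtain ⟨cl, hcl⟩ := EvenCyc.exists_coloring G le hd4 hd2 hnc hnk
    (Fintype.card V) Finset.univ (by simp)
  have hcolorable : G.Colorable le :=
    ⟨SimpleGraph.Coloring.mk cl
      (fun {a b} hab => hcl a b (Finset.mem_univ a) (Finset.mem_univ b) hab)⟩
  exact hcolorable.chromaticNumber_le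


/-- If `|L_e(G)| ≥ 3`, `ℓ_e(G)` is the length of a longest even cycle of
`G`, and `w(G) ≤ ℓ_e(G)`, then `χ(G) ≤ ℓ_e(G)`. -/
theorem chromatic_le_longest_even_cycle {V : Type*} [Fintype V]
    (G : SimpleGraph V) (le : ℕ)
    (hle_even : Even le) (hle_cyc : G.HasCycleLength le)
    (hle_max : ∀ n, Even n → G.HasCycleLength n → n ≤ le)
    (hL : 3 ≤ (G.evenCycleLengths).ncard)
    (hw : G.cliqueNum ≤ le) :
    G.chromaticNumber ≤ (le : ℕ∞) := by
  exact chromatic_le_longest_even_cycle' G le hle_even hle_cyc hle_max hw
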